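/- For the Bernoulli case θ¹ = 2, θ² = 0 of the beta-logistic family (so u = v = 1), the α-scalar curvature R^{(α)} = (1−α²)·[ψ'(θ¹)ψ''(u)ψ''(v) − ψ''(θ¹)(ψ'(u)ψ''(v) + ψ'(v)ψ''(u))]/(2𝒢²), where 𝒢 = ψ'(u)ψ'(v) − ψ'(θ¹)(ψ'(u)+ψ'(v)), equals −432·(1−α²)·ζ(3)·(6ζ(3) + π²ζ(3) − 2π²) / ( π⁴·(π² − 12)² ) for every real α. -/

import Mathlib

/-- The trigamma function `ψ'(z) = d²/dz² log Γ(z)`. -/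
noncomputable def trigamma (z : ℝ) : ℝ := iteratedDeriv 2 (fun x => Real.log (Real.Gamma x)) z

/-- The tetragamma function `ψ''(z) = d³/dz³ log Γ(z)`. -/
noncomputable def tetragamma (z : ℝ) : ℝ := iteratedDeriv 3 (fun x => Real.log (Real.Gamma x)) z

open Real Filter Topology Set Finset

namespace BLaux

local notation "γ" => Real.eulerMascheroniConstant

noncomputable def w (n : ℕ) (x : ℝ) : ℝ := x / (n + 1) + Real.log (n + 1) - Real.log (x + n + 1)

noncomputable def S (x : ℝ) : ℝ := ∑' n : ℕ, w n x
noncomputable def S₁ (x : ℝ) : ℝ := ∑' n : ℕ, (((n : ℝ) + 1)⁻¹ - (x + n + 1)⁻¹)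
noncomputable def S₂ (x : ℝ) : ℝ := ∑' n : ℕ, ((x + (n : ℝ) + 1) ^ 2)⁻¹
noncomputable def S₃ (x : ℝ) : ℝ := ∑' n : ℕ, (-2 * ((x + (n : ℝ) + 1) ^ 3)⁻¹)

noncomputable def g (x : ℝ) : ℝ := -(γ * x) - Real.log x + S x
noncomputable def G₁ (x : ℝ) : ℝ := -γ - x⁻¹ + S₁ x
noncomputable def G₂ (x : ℝ) : ℝ := (x ^ 2)⁻¹ + S₂ x
noncomputable def G₃ (x : ℝ) : ℝ := -2 * (x ^ 3)⁻¹ + S₃ x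

lemma pos_aux {x : ℝ} (hx : 0 < x) (n : ℕ) : 0 < x + (n : ℝ) + 1 := by positivity

lemma summable_sq : Summable (fun n : ℕ => (((n : ℝ) + 1) ^ 2)⁻¹) := by
  have h := (Real.summable_nat_pow_inv (p := 2)).mpr (by norm_num)
  have h2 := (summable_nat_add_iff (f := fun n : ℕ => ((n : ℝ) ^ 2)⁻¹) 1).mpr h
  exact h2.congr (by intro n; push_cast; ring_nf)

lemma summable_cube : Summable (fun n : ℕ => (((n : ℝ) + 1) ^ 3)⁻¹) := by
  have h := (Real.summable_nat_pow_inv (p := 3)).mpr (by norm_num)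
  have h2 := (summable_nat_add_iff (f := fun n : ℕ => ((n : ℝ) ^ 3)⁻¹) 1).mpr h
  exact h2.congr (by intro n; push_cast; ring_nf)

lemma w_nonneg {x : ℝ} (hx : 0 < x) (n : ℕ) : 0 ≤ w n x := by
  have h1 : (0:ℝ) < x + n + 1 := pos_aux hx n
  have h2 : (0:ℝ) < (n:ℝ) + 1 := by positivity
  have hlog : Real.log (x + n + 1) - Real.log (n + 1) ≤ x / (n + 1) := by
    rw [← Real.log_div h1.ne' h2.ne']
    have h3 := Real.log_le_sub_one_of_pos (x := (x + (n:ℝ) + 1) / ((n:ℝ) + 1)) (by positivity)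
    have h4 : (x + (n:ℝ) + 1) / ((n:ℝ) + 1) - 1 = x / ((n:ℝ) + 1) := by field_simp; ring
    linarith [h3.trans_eq h4]
  simp only [w]; linarith

lemma w_le {x : ℝ} (hx : 0 < x) (n : ℕ) : w n x ≤ x ^ 2 * (((n : ℝ) + 1) ^ 2)⁻¹ := by
  have h1 : (0:ℝ) < x + n + 1 := pos_aux hx n
  have h2 : (0:ℝ) < (n:ℝ) + 1 := by positivity
  have hlog : x / (x + n + 1) ≤ Real.log (x + n + 1) - Real.log (n + 1) := by
    rw [← Real.log_div h1.ne' h2.ne']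
    have h3 := Real.log_le_sub_one_of_pos (x := ((n:ℝ) + 1) / (x + (n:ℝ) + 1)) (by positivity)
    have h4 : Real.log (((n:ℝ) + 1) / (x + (n:ℝ) + 1)) = - Real.log ((x + (n:ℝ) + 1) / ((n:ℝ) + 1)) := by
      rw [← Real.log_inv]; congr 1; rw [inv_div]
    have h5 : ((n:ℝ) + 1) / (x + (n:ℝ) + 1) - 1 = - (x / (x + (n:ℝ) + 1)) := by field_simp; ring
    rw [h4, h5] at h3
    linarith
  have key : w n x ≤ x / (n + 1) - x / (x + n + 1) := by simp only [w]; linarith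
  refine key.trans ?_
  have e : x / ((n:ℝ) + 1) - x / (x + (n:ℝ) + 1) = x ^ 2 / (((n:ℝ) + 1) * (x + (n:ℝ) + 1)) := by
    field_simp; ring
  rw [e, ← div_eq_mul_inv]
  gcongr
  nlinarith

lemma summable_w {x : ℝ} (hx : 0 < x) : Summable (fun n => w n x) :=
  Summable.of_nonneg_of_le (w_nonneg hx) (w_le hx) (summable_sq.mul_left _)

lemma summable_S₁term {x : ℝ} (hx : 0 < x) :
    Summable (fun n : ℕ => (((n : ℝ) + 1)⁻¹ - (x + n + 1)⁻¹)) := by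
  refine Summable.of_nonneg_of_le (fun n => ?_) (fun n => ?_) (summable_sq.mul_left x)
  · have h1 := pos_aux hx n
    have h2 : (0:ℝ) < (n:ℝ) + 1 := by positivity
    rw [sub_nonneg]
    exact inv_anti₀ h2 (by linarith)
  · have h1 := pos_aux hx n
    have h2 : (0:ℝ) < (n:ℝ) + 1 := by positivity
    have e : ((n:ℝ) + 1)⁻¹ - (x + n + 1)⁻¹ = x / (((n:ℝ) + 1) * (x + n + 1)) := by
      field_simp
      ring
    rw [e, ← div_eq_mul_inv]
    gcongr
    nlinarith

lemma summable_S₂term {x : ℝ} (hx : 0 < x) :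
    Summable (fun n : ℕ => ((x + (n : ℝ) + 1) ^ 2)⁻¹) := by
  refine Summable.of_nonneg_of_le (fun n => by positivity) (fun n => ?_) summable_sq
  have h1 := pos_aux hx n
  gcongr
  linarith

lemma summable_S₃term {x : ℝ} (hx : 0 < x) :
    Summable (fun n : ℕ => (-2 * ((x + (n : ℝ) + 1) ^ 3)⁻¹)) := by
  apply Summable.mul_left
  refine Summable.of_nonneg_of_le (fun n => by positivity) (fun n => ?_) summable_cube
  have h1 := pos_aux hx n
  gcongr
  linarith

lemma S₁term_nonneg {x : ℝ} (hx : 0 < x) (n : ℕ) :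
    0 ≤ ((n : ℝ) + 1)⁻¹ - (x + n + 1)⁻¹ := by
  have h1 := pos_aux hx n
  have h2 : (0:ℝ) < (n:ℝ) + 1 := by positivity
  rw [sub_nonneg]
  exact inv_anti₀ h2 (by linarith)

lemma S₁term_le {x : ℝ} (hx : 0 < x) (n : ℕ) :
    ((n : ℝ) + 1)⁻¹ - (x + n + 1)⁻¹ ≤ x * (((n : ℝ) + 1) ^ 2)⁻¹ := by
  have h1 := pos_aux hx n
  have h2 : (0:ℝ) < (n:ℝ) + 1 := by positivity
  have e : ((n:ℝ) + 1)⁻¹ - (x + n + 1)⁻¹ = x / (((n:ℝ) + 1) * (x + n + 1)) := by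
    field_simp
    ring
  rw [e, ← div_eq_mul_inv]
  gcongr
  nlinarith

lemma hasDerivAt_w {x : ℝ} (hx : 0 < x) (n : ℕ) :
    HasDerivAt (w n) (((n : ℝ) + 1)⁻¹ - (x + n + 1)⁻¹) x := by
  have h1 := pos_aux hx n
  have hlin : HasDerivAt (fun y : ℝ => y + (n:ℝ) + 1) 1 x := by
    simpa [add_assoc] using (hasDerivAt_id x).add_const ((n:ℝ) + 1)
  have hlog : HasDerivAt (fun y : ℝ => Real.log (y + (n:ℝ) + 1)) (1 / (x + n + 1)) x := by
    simpa using hlin.log h1.ne'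
  have hfst : HasDerivAt (fun y : ℝ => y / ((n:ℝ) + 1) + Real.log ((n:ℝ) + 1))
      (((n:ℝ) + 1)⁻¹) x := by
    simpa [one_div] using ((hasDerivAt_id x).div_const ((n:ℝ) + 1)).add_const (Real.log ((n:ℝ)+1))
  have := hfst.sub hlog
  rw [one_div] at this
  exact this

lemma hasDerivAt_S {x : ℝ} (hx : 0 < x) : HasDerivAt S (S₁ x) x := by
  refine hasDerivAt_tsum_of_isPreconnected
    (u := fun n : ℕ => (x + 1) * (((n:ℝ) + 1) ^ 2)⁻¹)
    (summable_sq.mul_left _) isOpen_Ioo ((convex_Ioo (0:ℝ) (x+1)).isPreconnected)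
    (fun n y hy => hasDerivAt_w hy.1 n) (fun n y hy => ?_)
    (mem_Ioo.mpr ⟨hx, by linarith⟩) (summable_w hx) (mem_Ioo.mpr ⟨hx, by linarith⟩)
  rw [Real.norm_eq_abs, abs_of_nonneg (S₁term_nonneg hy.1 n)]
  calc ((n : ℝ) + 1)⁻¹ - (y + n + 1)⁻¹ ≤ y * (((n : ℝ) + 1) ^ 2)⁻¹ := S₁term_le hy.1 n
    _ ≤ (x + 1) * (((n : ℝ) + 1) ^ 2)⁻¹ := by gcongr; exact hy.2.le

lemma hasDerivAt_S₁term {x : ℝ} (hx : 0 < x) (n : ℕ) :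
    HasDerivAt (fun y : ℝ => ((n : ℝ) + 1)⁻¹ - (y + n + 1)⁻¹) (((x + (n:ℝ) + 1) ^ 2)⁻¹) x := by
  have h1 := pos_aux hx n
  have hlin : HasDerivAt (fun y : ℝ => y + (n:ℝ) + 1) 1 x := by
    simpa [add_assoc] using (hasDerivAt_id x).add_const ((n:ℝ) + 1)
  have hinv := hlin.inv h1.ne'
  have := (hasDerivAt_const x (((n:ℝ) + 1)⁻¹)).sub hinv
  refine this.congr_deriv ?_
  field_simp
  ring

lemma hasDerivAt_S₁ {x : ℝ} (hx : 0 < x) : HasDerivAt S₁ (S₂ x) x := by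
  refine hasDerivAt_tsum_of_isPreconnected
    (u := fun n : ℕ => (((n:ℝ) + 1) ^ 2)⁻¹)
    summable_sq isOpen_Ioi (convex_Ioi (0:ℝ)).isPreconnected
    (fun n y hy => hasDerivAt_S₁term hy n) (fun n y hy => ?_)
    (mem_Ioi.mpr one_pos) (summable_S₁term one_pos) (mem_Ioi.mpr hx)
  have h1 := pos_aux (mem_Ioi.mp hy) n
  rw [Real.norm_eq_abs, abs_of_nonneg (by positivity)]
  apply inv_anti₀ (by positivity)
  nlinarith [mem_Ioi.mp hy]

lemma hasDerivAt_S₂term {x : ℝ} (hx : 0 < x) (n : ℕ) :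
    HasDerivAt (fun y : ℝ => ((y + (n:ℝ) + 1) ^ 2)⁻¹) (-2 * ((x + (n:ℝ) + 1) ^ 3)⁻¹) x := by
  have h1 := pos_aux hx n
  have hlin : HasDerivAt (fun y : ℝ => y + (n:ℝ) + 1) 1 x := by
    simpa [add_assoc] using (hasDerivAt_id x).add_const ((n:ℝ) + 1)
  have hpow := hlin.pow 2
  have hinv := hpow.inv (pow_ne_zero 2 h1.ne')
  refine hinv.congr_deriv ?_
  simp only [Pi.pow_apply]
  field_simp
  ring

lemma hasDerivAt_S₂ {x : ℝ} (hx : 0 < x) : HasDerivAt S₂ (S₃ x) x := by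
  refine hasDerivAt_tsum_of_isPreconnected
    (u := fun n : ℕ => 2 * (((n:ℝ) + 1) ^ 3)⁻¹)
    (summable_cube.mul_left _) isOpen_Ioi (convex_Ioi (0:ℝ)).isPreconnected
    (fun n y hy => hasDerivAt_S₂term hy n) (fun n y hy => ?_)
    (mem_Ioi.mpr one_pos) (summable_S₂term one_pos) (mem_Ioi.mpr hx)
  have h1 := pos_aux (mem_Ioi.mp hy) n
  rw [Real.norm_eq_abs, abs_mul, abs_of_nonpos (by norm_num : (-2:ℝ) ≤ 0)]
  norm_num
  rw [abs_of_nonneg (by positivity)]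
  apply inv_anti₀ (by positivity)
  exact pow_le_pow_left₀ (by positivity : (0:ℝ) ≤ (n:ℝ)+1) (by linarith [mem_Ioi.mp hy] : ((n:ℝ)+1) ≤ y + n + 1) 3

lemma hasDerivAt_g {x : ℝ} (hx : 0 < x) : HasDerivAt g (G₁ x) x := by
  have h1 : HasDerivAt (fun y : ℝ => -(γ * y)) (-γ) x := by
    have := ((hasDerivAt_id x).const_mul γ).neg
    simp at this
    exact this
  have h2 := Real.hasDerivAt_log hx.ne'
  have := (h1.sub h2).add (hasDerivAt_S hx)
  simp only [G₁, sub_eq_add_neg] at this ⊢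
  exact this

lemma hasDerivAt_G₁ {x : ℝ} (hx : 0 < x) : HasDerivAt G₁ (G₂ x) x := by
  have h2 := hasDerivAt_inv hx.ne'
  have h := ((hasDerivAt_const x (-γ)).sub h2).add (hasDerivAt_S₁ hx)
  have hfun : G₁ = fun y => -γ - y⁻¹ + S₁ y := rfl
  rw [hfun]
  refine h.congr_deriv ?_
  simp only [G₂]
  ring

lemma hasDerivAt_G₂ {x : ℝ} (hx : 0 < x) : HasDerivAt G₂ (G₃ x) x := by
  have hpow := (hasDerivAt_pow 2 x).inv (by positivity)
  have := hpow.add (hasDerivAt_S₂ hx)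
  refine this.congr_deriv ?_
  simp only [G₃]
  congr 1
  have hx' : x ≠ 0 := hx.ne'
  field_simp
  ring


lemma harmonic_real (N : ℕ) : ((harmonic N : ℚ) : ℝ) = ∑ i ∈ Finset.range N, ((i : ℝ) + 1)⁻¹ := by
  rw [harmonic]
  push_cast
  rfl

lemma tendsto_H :
    Tendsto (fun N : ℕ => (∑ i ∈ Finset.range N, ((i : ℝ) + 1)⁻¹) - Real.log ((N : ℝ) + 1))
      atTop (𝓝 γ) := by
  apply Real.tendsto_harmonic_sub_log_add_one.congr
  intro N
  rw [harmonic_real]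

lemma tendsto_log_ratio {x : ℝ} (hx : 0 < x) :
    Tendsto (fun N : ℕ => Real.log ((N : ℝ) + 1) - Real.log (x + N + 1)) atTop (𝓝 0) := by
  have hsmall : Tendsto (fun N : ℕ => x / ((N : ℝ) + 1)) atTop (𝓝 0) := by
    apply Tendsto.div_atTop (tendsto_const_nhds (x := x))
    exact tendsto_atTop_add_const_right _ 1 tendsto_natCast_atTop_atTop
  have h1 : Tendsto (fun N : ℕ => (1 : ℝ) + x / ((N : ℝ) + 1)) atTop (𝓝 1) := by
    simpa using hsmall.const_add 1
  have h2 : Tendsto (fun N : ℕ => Real.log ((1 : ℝ) + x / ((N : ℝ) + 1))) atTop (𝓝 0) := by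
    have := (Real.continuousAt_log (by norm_num : (1:ℝ) ≠ 0)).tendsto.comp h1
    simp at this
    exact this
  have e : ∀ N : ℕ, Real.log ((N:ℝ)+1) - Real.log (x + N + 1) = -Real.log (1 + x/((N:ℝ)+1)) := by
    intro N
    have hN : (0:ℝ) < (N:ℝ)+1 := by positivity
    have e2 : (1:ℝ) + x/((N:ℝ)+1) = (x + N + 1)/((N:ℝ)+1) := by field_simp; ring
    rw [e2, Real.log_div (by positivity) hN.ne']
    ring
  simp only [e]
  simpa using h2.neg

lemma S_one : S 1 = γ := by
  have hs := (summable_w one_pos).hasSum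
  have ht := hs.tendsto_sum_nat
  have hps : ∀ N : ℕ, ∑ n ∈ Finset.range N, w n 1 =
      ((∑ i ∈ Finset.range N, ((i : ℝ) + 1)⁻¹) - Real.log ((N : ℝ) + 1)) := by
    intro N
    have htel := Finset.sum_range_sub' (fun i : ℕ => Real.log ((i : ℝ) + 1)) N
    have e : ∀ n : ℕ, w n 1 = ((n : ℝ) + 1)⁻¹ +
        (Real.log ((n : ℝ) + 1) - Real.log (((n : ℕ) + 1 : ℕ) + 1)) := by
      intro n
      simp only [w]
      push_cast
      rw [one_div]
      ring_nf
    rw [Finset.sum_congr rfl (fun n _ => e n), Finset.sum_add_distrib, htel]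
    push_cast
    simp [Real.log_one, sub_eq_add_neg]
  have ht2 : Tendsto (fun N => ∑ n ∈ Finset.range N, w n 1) atTop (𝓝 γ) :=
    tendsto_H.congr (fun N => (hps N).symm)
  exact tendsto_nhds_unique ht ht2


lemma S_feq {x : ℝ} (hx : 0 < x) : S (x + 1) = S x + γ + Real.log (x + 1) := by
  have h1 := summable_w (show (0:ℝ) < x + 1 by linarith)
  have h2 := summable_w hx
  have hs := h1.hasSum.sub h2.hasSum
  have ht := hs.tendsto_sum_nat
  have hps : ∀ N : ℕ, ∑ n ∈ Finset.range N, (w n (x + 1) - w n x) =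
      ((∑ i ∈ Finset.range N, ((i : ℝ) + 1)⁻¹) - Real.log ((N : ℝ) + 1))
        + (Real.log ((N : ℝ) + 1) - Real.log (x + N + 1)) + Real.log (x + 1) := by
    intro N
    have htel := Finset.sum_range_sub' (fun i : ℕ => Real.log (x + (i : ℝ) + 1)) N
    have e : ∀ n : ℕ, w n (x + 1) - w n x = ((n : ℝ) + 1)⁻¹ +
        (Real.log (x + (n : ℝ) + 1) - Real.log (x + ((n : ℕ) + 1 : ℕ) + 1)) := by
      intro n
      simp only [w]
      push_cast
      rw [show x + 1 + (n : ℝ) + 1 = x + ((n : ℝ) + 1) + 1 from by ring]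
      ring
    rw [Finset.sum_congr rfl (fun n _ => e n), Finset.sum_add_distrib, htel]
    simp only [Nat.cast_zero, add_zero, zero_add]
    ring
  have hlim : Tendsto (fun N : ℕ => ∑ n ∈ Finset.range N, (w n (x + 1) - w n x)) atTop
      (𝓝 (γ + 0 + Real.log (x + 1))) := by
    apply Tendsto.congr (fun N => (hps N).symm)
    exact ((tendsto_H.add (tendsto_log_ratio hx)).add tendsto_const_nhds)
  have := tendsto_nhds_unique ht hlim
  have e3 : S (x + 1) - S x = γ + 0 + Real.log (x + 1) := this
  linarith [e3]

lemma g_feq {x : ℝ} (hx : 0 < x) : g (x + 1) = g x + Real.log x := by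
  simp only [g, S_feq hx]
  ring

lemma g_one : g 1 = 0 := by
  simp [g, S_one]

lemma S₂_nonneg (x : ℝ) : 0 ≤ S₂ x := tsum_nonneg (fun n => by positivity)

lemma deriv_g_eq {x : ℝ} (hx : 0 < x) : deriv g x = G₁ x := (hasDerivAt_g hx).deriv

lemma g_convex : ConvexOn ℝ (Ioi 0) g := by
  apply convexOn_of_deriv2_nonneg (convex_Ioi 0)
  · intro x hx
    exact (hasDerivAt_g hx).differentiableAt.continuousAt.continuousWithinAt
  · rw [interior_Ioi]
    intro x hx
    exact (hasDerivAt_g hx).differentiableAt.differentiableWithinAt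
  · rw [interior_Ioi]
    intro x hx
    have hev : deriv g =ᶠ[𝓝 x] G₁ :=
      Filter.eventuallyEq_of_mem (isOpen_Ioi.mem_nhds hx) (fun y hy => deriv_g_eq hy)
    exact (hev.differentiableAt_iff.mpr (hasDerivAt_G₁ hx).differentiableAt).differentiableWithinAt
  · rw [interior_Ioi]
    intro x hx
    have hev : deriv g =ᶠ[𝓝 x] G₁ :=
      Filter.eventuallyEq_of_mem (isOpen_Ioi.mem_nhds hx) (fun y hy => deriv_g_eq hy)
    have : deriv (deriv g) x = G₂ x := by
      rw [hev.deriv_eq]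
      exact (hasDerivAt_G₁ hx).deriv
    have h2 : deriv^[2] g x = G₂ x := by
      rw [show deriv^[2] g = deriv (deriv g) from rfl]
      exact this
    rw [h2]
    have := S₂_nonneg x
    have : (0:ℝ) ≤ (x^2)⁻¹ := by positivity
    simp only [G₂]
    linarith [S₂_nonneg x]

lemma logGamma_eq {x : ℝ} (hx : 0 < x) : Real.log (Real.Gamma x) = g x := by
  have key : Set.EqOn (fun y => Real.exp (g y)) Real.Gamma (Ioi 0) := by
    apply Real.eq_Gamma_of_log_convex
    · have e : (Real.log ∘ fun y => Real.exp (g y)) = g := by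
        funext y; simp [Function.comp, Real.log_exp]
      rw [e]
      exact g_convex
    · intro y hy
      rw [g_feq hy, Real.exp_add, Real.exp_log hy]
      ring
    · intro y hy
      positivity
    · simp [g_one]
  rw [show Real.Gamma x = Real.exp (g x) from (key hx).symm, Real.log_exp]

lemma deriv_eqOn {f h : ℝ → ℝ} {s : Set ℝ} (hs : IsOpen s) (he : Set.EqOn f h s) :
    Set.EqOn (deriv f) (deriv h) s := fun _ hx =>
  Filter.EventuallyEq.deriv_eq (Filter.eventuallyEq_of_mem (hs.mem_nhds hx) he)

lemma eqOn₀ : Set.EqOn (fun x => Real.log (Real.Gamma x)) g (Ioi 0) :=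
  fun _ hx => logGamma_eq hx

lemma eqOn₁ : Set.EqOn (deriv (fun x => Real.log (Real.Gamma x))) G₁ (Ioi 0) :=
  fun x hx => (deriv_eqOn isOpen_Ioi eqOn₀ hx).trans (hasDerivAt_g hx).deriv

lemma eqOn₂ : Set.EqOn (deriv (deriv (fun x => Real.log (Real.Gamma x)))) G₂ (Ioi 0) :=
  fun x hx => (deriv_eqOn isOpen_Ioi eqOn₁ hx).trans (hasDerivAt_G₁ hx).deriv

lemma eqOn₃ : Set.EqOn (deriv (deriv (deriv (fun x => Real.log (Real.Gamma x))))) G₃ (Ioi 0) :=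
  fun x hx => (deriv_eqOn isOpen_Ioi eqOn₂ hx).trans (hasDerivAt_G₂ hx).deriv

lemma trigamma_eq {x : ℝ} (hx : 0 < x) : trigamma x = G₂ x := by
  rw [trigamma, iteratedDeriv_succ, iteratedDeriv_one]
  exact eqOn₂ hx

lemma tetragamma_eq {x : ℝ} (hx : 0 < x) : tetragamma x = G₃ x := by
  rw [tetragamma, iteratedDeriv_succ, iteratedDeriv_succ, iteratedDeriv_one]
  exact eqOn₃ hx

lemma S₂_one : S₂ 1 = π ^ 2 / 6 - 1 := by
  have base := hasSum_zeta_two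
  have e : (π ^ 2 / 6 : ℝ) = (π ^ 2 / 6 - 1) + ∑ i ∈ Finset.range 2, (1 : ℝ) / (i : ℝ) ^ 2 := by
    norm_num [Finset.sum_range_succ]
  have h := (hasSum_nat_add_iff (f := fun n : ℕ => (1 : ℝ) / (n : ℝ) ^ 2) 2).mpr (e ▸ base)
  have efun : (fun n : ℕ => (1 : ℝ) / ((n + 2 : ℕ) : ℝ) ^ 2)
      = fun n : ℕ => (((1 : ℝ) + n + 1) ^ 2)⁻¹ := by
    funext n; push_cast; ring
  rw [efun] at h
  exact h.tsum_eq

lemma S₂_two : S₂ 2 = π ^ 2 / 6 - 5 / 4 := by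
  have base := hasSum_zeta_two
  have e : (π ^ 2 / 6 : ℝ) = (π ^ 2 / 6 - 5 / 4) + ∑ i ∈ Finset.range 3, (1 : ℝ) / (i : ℝ) ^ 2 := by
    norm_num [Finset.sum_range_succ]
  have h := (hasSum_nat_add_iff (f := fun n : ℕ => (1 : ℝ) / (n : ℝ) ^ 2) 3).mpr (e ▸ base)
  have efun : (fun n : ℕ => (1 : ℝ) / ((n + 3 : ℕ) : ℝ) ^ 2)
      = fun n : ℕ => (((2 : ℝ) + n + 1) ^ 2)⁻¹ := by
    funext n; push_cast; ring
  rw [efun] at h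
  exact h.tsum_eq

lemma S₃_one {z : ℝ} (hc : HasSum (fun n : ℕ => 1 / ((n : ℝ) + 1) ^ 3) z) :
    S₃ 1 = -2 * (z - 1) := by
  have e : z = (z - 1) + ∑ i ∈ Finset.range 1, (1 : ℝ) / ((i : ℝ) + 1) ^ 3 := by norm_num
  have h := (hasSum_nat_add_iff (f := fun n : ℕ => (1 : ℝ) / ((n : ℝ) + 1) ^ 3) 1).mpr (e ▸ hc)
  have efun : (fun n : ℕ => (1 : ℝ) / (((n + 1 : ℕ) : ℝ) + 1) ^ 3)
      = fun n : ℕ => (((1 : ℝ) + n + 1) ^ 3)⁻¹ := by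
    funext n; push_cast; ring
  rw [efun] at h
  exact (h.mul_left (-2)).tsum_eq

lemma S₃_two {z : ℝ} (hc : HasSum (fun n : ℕ => 1 / ((n : ℝ) + 1) ^ 3) z) :
    S₃ 2 = -2 * (z - 9 / 8) := by
  have e : z = (z - 9 / 8) + ∑ i ∈ Finset.range 2, (1 : ℝ) / ((i : ℝ) + 1) ^ 3 := by
    norm_num [Finset.sum_range_succ]
  have h := (hasSum_nat_add_iff (f := fun n : ℕ => (1 : ℝ) / ((n : ℝ) + 1) ^ 3) 2).mpr (e ▸ hc)
  have efun : (fun n : ℕ => (1 : ℝ) / (((n + 2 : ℕ) : ℝ) + 1) ^ 3)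
      = fun n : ℕ => (((2 : ℝ) + n + 1) ^ 3)⁻¹ := by
    funext n; push_cast; ring
  rw [efun] at h
  exact (h.mul_left (-2)).tsum_eq

lemma trigamma_one : trigamma 1 = π ^ 2 / 6 := by
  rw [trigamma_eq one_pos]
  simp only [G₂, S₂_one]
  ring

lemma trigamma_two : trigamma 2 = π ^ 2 / 6 - 1 := by
  rw [trigamma_eq two_pos]
  simp only [G₂, S₂_two]
  ring

lemma tetragamma_one {z : ℝ} (hc : HasSum (fun n : ℕ => 1 / ((n : ℝ) + 1) ^ 3) z) :
    tetragamma 1 = -2 * z := by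
  rw [tetragamma_eq one_pos]
  simp only [G₃, S₃_one hc]
  ring

lemma tetragamma_two {z : ℝ} (hc : HasSum (fun n : ℕ => 1 / ((n : ℝ) + 1) ^ 3) z) :
    tetragamma 2 = 2 - 2 * z := by
  rw [tetragamma_eq two_pos]
  simp only [G₃, S₃_two hc]
  ring

end BLaux

/-- In the Bernoulli case `θ¹ = 2`, `θ² = 0` (so `u = v = 1`) of the beta-logistic family,
the α-scalar curvature
`R^{(α)} = (1−α²)(ψ'(2)ψ''(1)ψ''(1) − ψ''(2)(ψ'(1)ψ''(1) + ψ'(1)ψ''(1)))/(2𝒢²)`,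
with `𝒢 = ψ'(1)ψ'(1) − ψ'(2)(ψ'(1)+ψ'(1))`, equals
`−432(1−α²)ζ(3)(6ζ(3) + π²ζ(3) − 2π²)/(π⁴(π²−12)²)`. -/
theorem bernoulli_case_scalar_curvature (α z : ℝ)
    (hz : z = ∑' n : ℕ, 1 / ((n : ℝ) + 1) ^ 3)
    (𝒢 : ℝ) (hgg : 𝒢 = trigamma 1 * trigamma 1 - trigamma 2 * (trigamma 1 + trigamma 1)) :
    (1 - α ^ 2) *
        (trigamma 2 * tetragamma 1 * tetragamma 1 -
          tetragamma 2 * (trigamma 1 * tetragamma 1 + trigamma 1 * tetragamma 1)) /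
        (2 * 𝒢 ^ 2) =
      -432 * (1 - α ^ 2) * z * (6 * z + Real.pi ^ 2 * z - 2 * Real.pi ^ 2) /
        (Real.pi ^ 4 * (Real.pi ^ 2 - 12) ^ 2) := by
  have hsum : Summable (fun n : ℕ => (1 : ℝ) / ((n : ℝ) + 1) ^ 3) :=
    BLaux.summable_cube.congr (fun n => (one_div _).symm)
  have hc : HasSum (fun n : ℕ => 1 / ((n : ℝ) + 1) ^ 3) z := by
    rw [hz]; exact hsum.hasSum
  rw [hgg, BLaux.trigamma_one, BLaux.trigamma_two, BLaux.tetragamma_one hc,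
    BLaux.tetragamma_two hc]
  have hπ : Real.pi ≠ 0 := Real.pi_ne_zero
  have h12 : Real.pi ^ 2 - 12 ≠ 0 := by nlinarith [Real.pi_lt_d2, Real.pi_pos]
  have h12' : (12 : ℝ) - Real.pi ^ 2 ≠ 0 := by nlinarith [Real.pi_lt_d2, Real.pi_pos]
  rw [show (Real.pi ^ 2 / 6 * (Real.pi ^ 2 / 6)
        - (Real.pi ^ 2 / 6 - 1) * (Real.pi ^ 2 / 6 + Real.pi ^ 2 / 6))
      = Real.pi ^ 2 * (12 - Real.pi ^ 2) / 36 from by ring]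
  field_simp
  ring
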